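/- Let m ≥ 1 and let r : Fin m → ℕ with r t ≥ 1 for all t. Let A = ∏_{t : Fin m} ℤ/(r t)ℤ, a finite abelian group. For b ∈ A define the character χ_b : A → ℂ by χ_b(a) = exp(2πi ∑_{t} (a t)·(b t)/(r t)) (lifting the coordinates a t, b t ∈ ℤ/(r t)ℤ to their integer representatives). Let ρ be the representation of A on ℂ^{m+1} = (Fin (m+1) → ℂ) in which ρ(a) multiplies the k-th coordinate by exp(2πi (a k)/(r k)) for each k : Fin m, and multiplies the last coordinate by exp(−2πi ∑_{t} (a t)/(r t)). For t : Fin m let e_t ∈ A be the element whose t-th coordinate is 1 and whose other coordinates are 0, and set e = ∑_{t} e_t. Then for every b ∈ A, the complex dimension of the simultaneous eigenspace {v ∈ ℂ^{m+1} | ρ(a) v = χ_b(a) · v for all a ∈ A} equals (the number of t : Fin m with e_t = b) + (1 if b = −e, and 0 otherwise). (Equivalently: in the McKay quiver of the abelian group G(r₁,…,r_m) embedded diagonally into SL(m+1, ℂ), the arrows out of a vertex i are exactly one arrow i → i + e_t for each t and one arrow i → i − e.) -/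

import Mathlib

open Module

/-- The character `χ_b` of the finite abelian group `A = ∏ t, ℤ/(r t)ℤ` attached to `b ∈ A`:
`χ_b a = exp(2πi ∑ t, (a t)(b t)/(r t))`, lifting coordinates to integer representatives. -/
noncomputable def abelChar {m : ℕ} (r : Fin m → ℕ) (b a : ∀ t, ZMod (r t)) : ℂ :=
  Complex.exp (2 * Real.pi * Complex.I *
    ∑ t, (((a t).val : ℂ) * ((b t).val : ℂ) / ((r t : ℕ) : ℂ)))

/-- The scalar by which `a ∈ A = ∏ t, ℤ/(r t)ℤ` acts on the `k`-th coordinate of `ℂ^{m+1}`: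
`exp(2πi (a k)/(r k))` for `k < m`, and `exp(-2πi ∑ t, (a t)/(r t))` on the last coordinate. -/
noncomputable def abelFactor {m : ℕ} (r : Fin m → ℕ) (a : ∀ t, ZMod (r t))
    (k : Fin (m + 1)) : ℂ :=
  if h : (k : ℕ) < m then
    Complex.exp (2 * Real.pi * Complex.I * ((a ⟨k, h⟩).val : ℂ) / ((r ⟨k, h⟩ : ℕ) : ℂ))
  else
    Complex.exp (-(2 * Real.pi * Complex.I * ∑ t, (((a t).val : ℂ) / ((r t : ℕ) : ℂ))))

/-- The action of `a ∈ A = ∏ t, ℤ/(r t)ℤ` on `ℂ^{m+1}`, multiplying each coordinate by the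
corresponding root of unity (the diagonal embedding of `A` into `SL(m+1, ℂ)`). -/
noncomputable def abelRho {m : ℕ} (r : Fin m → ℕ) (a : ∀ t, ZMod (r t)) :
    (Fin (m + 1) → ℂ) →ₗ[ℂ] (Fin (m + 1) → ℂ) :=
  LinearMap.pi fun k => abelFactor r a k • LinearMap.proj k

/-- The coordinate subspace of `ℂ^n` supported on `{k | p k}`. -/
noncomputable def coordSub {n : ℕ} (p : Fin n → Prop) [DecidablePred p] :
    Submodule ℂ (Fin n → ℂ) where
  carrier := {v | ∀ k, ¬ p k → v k = 0}
  add_mem' := by intro x y hx hy k hk; simp [hx k hk, hy k hk]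
  zero_mem' := by intro k _; rfl
  smul_mem' := by intro c x hx k hk; simp [hx k hk]

/-- The coordinate subspace is linearly equivalent to functions on the support. -/
noncomputable def coordSubEquiv {n : ℕ} (p : Fin n → Prop) [DecidablePred p] :
    coordSub p ≃ₗ[ℂ] ({k // p k} → ℂ) where
  toFun v := fun k => v.1 k.1
  map_add' := by intros; rfl
  map_smul' := by intros; rfl
  invFun w := ⟨fun k => if h : p k then w ⟨k, h⟩ else 0, by intro k hk; simp [hk]⟩
  left_inv := by
    rintro ⟨v, hv⟩; ext k
    by_cases h : p k
    · simp [h]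
    · simp [h, hv k h]
  right_inv := by intro w; ext k; simp [k.2]

lemma finrank_coordSub {n : ℕ} (p : Fin n → Prop) [DecidablePred p] :
    finrank ℂ (coordSub p) = (Finset.univ.filter p).card := by
  rw [(coordSubEquiv p).finrank_eq, finrank_pi, Fintype.card_subtype]

lemma exp_frac_inj {n u v : ℕ} (hn : 0 < n) (hu : u < n) (hv : v < n)
    (h : Complex.exp (2 * Real.pi * Complex.I * ((u : ℂ) / n)) =
         Complex.exp (2 * Real.pi * Complex.I * ((v : ℂ) / n))) : u = v := by
  rw [Complex.exp_eq_exp_iff_exists_int] at h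
  obtain ⟨k, hk⟩ := h
  have hn0 : (n : ℂ) ≠ 0 := Nat.cast_ne_zero.mpr hn.ne'
  have hpi : (Real.pi : ℂ) ≠ 0 := by exact_mod_cast Real.pi_ne_zero
  field_simp at hk
  have hc : (u : ℂ) = v + k * n := by
    have h2 : (2 * (Real.pi : ℂ) * Complex.I) ≠ 0 := by
      simp [hpi, Complex.I_ne_zero]
    apply mul_left_cancel₀ h2
    ring_nf
    ring_nf at hk
    linear_combination (2 * (Real.pi : ℂ) * Complex.I) * hk
  have hz : (u : ℤ) = v + k * n := by exact_mod_cast hc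
  have hk1 : k < 1 := by
    nlinarith [hz, (by exact_mod_cast hu : (u:ℤ) < n), (by exact_mod_cast hv : (v:ℤ) < n)]
  have hk2 : -1 < k := by nlinarith [hz]
  have : k = 0 := by omega
  subst this
  simpa using hz

lemma abelChar_single {m : ℕ} (r : Fin m → ℕ) (b : ∀ t, ZMod (r t)) (s : Fin m)
    (h1 : 1 < r s) :
    abelChar r b (Pi.single s 1) =
      Complex.exp (2 * Real.pi * Complex.I * (((b s).val : ℂ) / (r s : ℂ))) := by
  rw [abelChar]
  congr 1
  rw [Finset.sum_eq_single s]
  · haveI : Fact (1 < r s) := ⟨h1⟩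
    rw [Pi.single_eq_same, ZMod.val_one]
    push_cast; ring
  · intro t _ hne
    rw [Pi.single_eq_of_ne hne]
    simp
  · simp

lemma abelChar_inj {m : ℕ} (r : Fin m → ℕ) (hr : ∀ t, 1 ≤ r t) {b b' : ∀ t, ZMod (r t)}
    (h : ∀ a, abelChar r b a = abelChar r b' a) : b = b' := by
  funext s
  by_cases h1 : 1 < r s
  · have hs := h (Pi.single s 1)
    rw [abelChar_single r b s h1, abelChar_single r b' s h1] at hs
    haveI : NeZero (r s) := ⟨by omega⟩
    have := exp_frac_inj (by omega : 0 < r s) (ZMod.val_lt (b s)) (ZMod.val_lt (b' s)) hs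
    exact ZMod.val_injective _ this
  · have h1' : r s = 1 := by have := hr s; omega
    haveI : Subsingleton (ZMod (r s)) := by rw [h1']; infer_instance
    exact Subsingleton.elim _ _

lemma factor_castSucc {m : ℕ} (r : Fin m → ℕ) (hr : ∀ t, 1 ≤ r t) (a : ∀ t, ZMod (r t))
    (t : Fin m) :
    abelFactor r a (Fin.castSucc t) = abelChar r (Pi.single t 1) a := by
  have ht : ((Fin.castSucc t : Fin (m+1)) : ℕ) < m := t.isLt
  rw [abelFactor, dif_pos ht, abelChar]
  have heq : (⟨(Fin.castSucc t : Fin (m+1)), ht⟩ : Fin m) = t := by ext; simp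
  rw [heq]
  congr 1
  rw [Finset.sum_eq_single t]
  · by_cases h1 : 1 < r t
    · haveI : Fact (1 < r t) := ⟨h1⟩
      rw [Pi.single_eq_same, ZMod.val_one]
      push_cast; ring
    · haveI : NeZero (r t) := ⟨by have := hr t; omega⟩
      have hv : (a t).val = 0 := by
        have := ZMod.val_lt (a t); have := hr t; omega
      rw [hv]
      simp
  · intro t' _ hne
    rw [Pi.single_eq_of_ne hne]
    simp
  · simp

lemma val_neg_one' (n : ℕ) (hn : 0 < n) : ((-1 : ZMod n)).val = n - 1 := by
  obtain ⟨k, rfl⟩ : ∃ k, n = k + 1 := ⟨n - 1, by omega⟩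
  simp [ZMod.val_neg_one]

lemma factor_last {m : ℕ} (r : Fin m → ℕ) (hr : ∀ t, 1 ≤ r t) (a : ∀ t, ZMod (r t)) :
    abelFactor r a (Fin.last m) =
      abelChar r (-(∑ t : Fin m, (Pi.single t 1 : ∀ t, ZMod (r t)))) a := by
  have he : (∑ t : Fin m, (Pi.single t 1 : ∀ t, ZMod (r t))) = fun t => 1 :=
    Finset.univ_sum_single (fun _ => 1)
  rw [abelFactor, dif_neg (by simp), abelChar, he]
  have hsum : ∑ t, (((a t).val : ℂ) * (((-(fun t => 1 : ∀ t, ZMod (r t))) t).val : ℂ) / (r t : ℂ))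
      = ((∑ t, (a t).val : ℕ) : ℂ) - ∑ t, (((a t).val : ℂ) / (r t : ℂ)) := by
    push_cast
    rw [← Finset.sum_sub_distrib]
    apply Finset.sum_congr rfl
    intro t _
    have hrt : (r t : ℂ) ≠ 0 := Nat.cast_ne_zero.mpr (by have := hr t; omega)
    have hv : (((-(fun t => 1 : ∀ t, ZMod (r t))) t).val : ℂ) = (r t : ℂ) - 1 := by
      have : (-(fun t => 1 : ∀ t, ZMod (r t))) t = -1 := rfl
      rw [this, val_neg_one' (r t) (hr t)]
      push_cast [Nat.cast_sub (hr t)]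
      ring
    rw [hv]
    field_simp
  rw [hsum, mul_sub, Complex.exp_sub]
  rw [show (2 * (Real.pi:ℂ) * Complex.I * ((∑ t, (a t).val : ℕ) : ℂ))
      = ((∑ t, (a t).val : ℕ) : ℤ) * (2 * (Real.pi:ℂ) * Complex.I) by push_cast; ring]
  rw [Complex.exp_int_mul_two_pi_mul_I, Complex.exp_neg]
  simp

/-- In the McKay quiver of the abelian group `G(r₁, …, r_m) = ∏ t, ℤ/(r t)ℤ` embedded
diagonally into `SL(m+1, ℂ)`, the arrows out of a vertex `i` are exactly one arrow
`i → i + e_t` for each `t` and one arrow `i → i - e`: for every character `χ_b`, the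
dimension of the simultaneous eigenspace `{v | ρ(a) v = χ_b(a) • v for all a}` equals the
number of `t` with `e_t = b`, plus `1` if `b = -e` and `0` otherwise. -/
theorem mckay_quiver_abelian_diag_sl
    {m : ℕ} (hm : 1 ≤ m) (r : Fin m → ℕ) (hr : ∀ t, 1 ≤ r t)
    (b : ∀ t, ZMod (r t)) :
    finrank ℂ
        ↥(⨅ a : ∀ t, ZMod (r t), Module.End.eigenspace (abelRho r a) (abelChar r b a)) =
      (Finset.univ.filter fun t : Fin m =>
          (Pi.single t 1 : ∀ t, ZMod (r t)) = b).card +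
        (if b = -(∑ t : Fin m, (Pi.single t 1 : ∀ t, ZMod (r t))) then 1 else 0) := by
  classical
  set p : Fin (m + 1) → Prop := fun k => ∀ a, abelFactor r a k = abelChar r b a with hp
  have key : (⨅ a : ∀ t, ZMod (r t),
      Module.End.eigenspace (abelRho r a) (abelChar r b a)) = coordSub p := by
    ext v
    simp only [Submodule.mem_iInf, Module.End.mem_eigenspace_iff]
    have happ : ∀ a k, abelRho r a v k = abelFactor r a k * v k := by
      intro a k
      simp [abelRho, LinearMap.pi_apply, smul_eq_mul]
    constructor
    · intro h k hk
      obtain ⟨a, ha⟩ := not_forall.mp hk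
      have := congrFun (h a) k
      rw [happ a k] at this
      have h0 : (abelFactor r a k - abelChar r b a) * v k = 0 := by
        rw [sub_mul, this]; simp [mul_comm]
      rcases mul_eq_zero.mp h0 with h' | h'
      · exact absurd (sub_eq_zero.mp h') ha
      · exact h'
    · intro h a
      funext k
      rw [happ a k]
      by_cases hk : p k
      · rw [hk a]; simp [Pi.smul_apply, smul_eq_mul]
      · simp [Pi.smul_apply, smul_eq_mul, h k hk]
  rw [key, finrank_coordSub, Finset.card_filter p, Fin.sum_univ_castSucc,
    Finset.card_filter]
  congr 1
  · apply Finset.sum_congr rfl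
    intro t _
    have hiff : p (Fin.castSucc t) ↔ (Pi.single t 1 : ∀ t, ZMod (r t)) = b := by
      constructor
      · intro hpk
        exact abelChar_inj r hr fun a => by rw [← factor_castSucc r hr a t, hpk a]
      · intro hb a
        rw [factor_castSucc r hr a t, hb]
    simp [hiff]
  · have hiff : p (Fin.last m) ↔
        b = -(∑ t : Fin m, (Pi.single t 1 : ∀ t, ZMod (r t))) := by
      constructor
      · intro hpk
        exact (abelChar_inj r hr fun a => by rw [← factor_last r hr a, hpk a]).symm
      · intro hb a
        rw [factor_last r hr a, hb]
    simp [hiff]
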